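/- Let u, w be adjacent vertices of the Farey graph 𝓕. Then the induced subgraph of 𝓕 on the vertex set V(𝓕) \ {u, w} has exactly two connected components. In particular, every edge of 𝓕 separates 𝓕. -/

import Mathlib

/-- Primitive vectors in `ℤ²`. -/
def PrimVec : Type := {v : Fin 2 → ℤ // IsCoprime (v 0) (v 1)}

/-- Identify a primitive vector with its negation. -/
def fareySetoid : Setoid PrimVec where
  r v w := v.1 = w.1 ∨ v.1 = -w.1
  iseqv := by
    refine ⟨fun v => Or.inl rfl, ?_, ?_⟩
    · rintro v w (h | h)
      · exact Or.inl h.symm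
      · exact Or.inr (by rw [h, neg_neg])
    · rintro u v w (h1 | h1) (h2 | h2)
      · exact Or.inl (h1.trans h2)
      · exact Or.inr (by rw [h1, h2])
      · exact Or.inr (by rw [h1, h2])
      · exact Or.inl (by rw [h1, h2, neg_neg])

/-- Vertices of the Farey graph: primitive vectors of `ℤ²` modulo negation. -/
def FareyVertex : Type := Quotient fareySetoid

def fareyDet (v w : Fin 2 → ℤ) : ℤ := v 0 * w 1 - v 1 * w 0

lemma fareyDet_neg_left (v w : Fin 2 → ℤ) : fareyDet (-v) w = -fareyDet v w := by
  simp [fareyDet]; ring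

lemma fareyDet_neg_right (v w : Fin 2 → ℤ) : fareyDet v (-w) = -fareyDet v w := by
  simp [fareyDet]; ring

/-- The Farey graph. -/
def Farey : SimpleGraph FareyVertex where
  Adj := Quotient.lift₂
    (fun v w : PrimVec => fareyDet v.1 w.1 = 1 ∨ fareyDet v.1 w.1 = -1)
    (by
      rintro a b a' b' (h1 | h1) (h2 | h2) <;>
        simp only [eq_iff_iff] <;>
        rw [h1, h2] <;>
        simp only [fareyDet_neg_left, fareyDet_neg_right, neg_neg] <;>
        omega)
  symm := by
    constructor
    intro a b
    refine Quotient.inductionOn₂ a b ?_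
    intro v w h
    have hd : fareyDet w.1 v.1 = -fareyDet v.1 w.1 := by simp [fareyDet]; ring
    show fareyDet w.1 v.1 = 1 ∨ fareyDet w.1 v.1 = -1
    rcases h with h | h <;> omega
  loopless := by
    constructor
    intro a
    refine Quotient.inductionOn a ?_
    intro v h
    have hd : fareyDet v.1 v.1 = 0 := by simp [fareyDet]; ring
    rcases (h : fareyDet v.1 v.1 = 1 ∨ fareyDet v.1 v.1 = -1) with h | h <;> omega

/-- The Farey vertex of a primitive vector. -/
def fv (v : Fin 2 → ℤ) (h : IsCoprime (v 0) (v 1)) : FareyVertex :=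
  Quotient.mk fareySetoid ⟨v, h⟩

namespace FareyAux

lemma isCoprime_iff_det (v : Fin 2 → ℤ) :
    IsCoprime (v 0) (v 1) ↔ ∃ y : Fin 2 → ℤ, fareyDet v y = 1 := by
  constructor
  · rintro ⟨s, t, hst⟩
    refine ⟨![-t, s], ?_⟩
    simp only [fareyDet, Matrix.cons_val_zero, Matrix.cons_val_one, Matrix.head_cons]
    linarith
  · rintro ⟨y, hy⟩
    refine ⟨y 1, -(y 0), ?_⟩
    simp only [fareyDet] at hy
    linarith

def mulV (u w x : Fin 2 → ℤ) : Fin 2 → ℤ := fun i => x 0 * u i + x 1 * w i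

lemma fareyDet_mulV (u w x y : Fin 2 → ℤ) :
    fareyDet (mulV u w x) (mulV u w y) = fareyDet u w * fareyDet x y := by
  simp only [mulV, fareyDet]; ring

lemma mulV_neg (u w x : Fin 2 → ℤ) : mulV u w (-x) = -(mulV u w x) := by
  funext i; simp only [mulV, Pi.neg_apply]; ring

def IsUni (u w : Fin 2 → ℤ) : Prop := fareyDet u w = 1 ∨ fareyDet u w = -1

lemma mulV_coprime {u w : Fin 2 → ℤ} (hd : IsUni u w) {x : Fin 2 → ℤ}
    (hx : IsCoprime (x 0) (x 1)) : IsCoprime (mulV u w x 0) (mulV u w x 1) := by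
  rw [isCoprime_iff_det] at hx ⊢
  obtain ⟨y, hy⟩ := hx
  rcases hd with hd | hd
  · exact ⟨mulV u w y, by rw [fareyDet_mulV, hd, hy, one_mul]⟩
  · exact ⟨-(mulV u w y), by rw [fareyDet_neg_right, fareyDet_mulV, hd, hy]; ring⟩

def invU (u w : Fin 2 → ℤ) : Fin 2 → ℤ := ![fareyDet u w * w 1, -(fareyDet u w * u 1)]
def invW (u w : Fin 2 → ℤ) : Fin 2 → ℤ := ![-(fareyDet u w * w 0), fareyDet u w * u 0]

lemma isUni_inv {u w : Fin 2 → ℤ} (hd : IsUni u w) : IsUni (invU u w) (invW u w) := by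
  have h1 : fareyDet (invU u w) (invW u w)
      = fareyDet u w * fareyDet u w * fareyDet u w := by
    simp only [invU, invW, fareyDet, Matrix.cons_val_zero, Matrix.cons_val_one,
      Matrix.head_cons]
    ring
  rcases hd with hd | hd <;> rw [IsUni, h1, hd] <;> norm_num

lemma mulV_inv_left {u w : Fin 2 → ℤ} (hd : IsUni u w) (x : Fin 2 → ℤ) :
    mulV (invU u w) (invW u w) (mulV u w x) = x := by
  have hD : u 0 * w 1 - u 1 * w 0 = fareyDet u w := rfl
  funext i
  fin_cases i <;>
    simp only [mulV, invU, invW, fareyDet, Matrix.cons_val_zero, Matrix.cons_val_one,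
      Matrix.head_cons, Fin.zero_eta, Fin.mk_one] <;>
    rcases hd with hd | hd <;>
    rw [fareyDet] at hd
  · linear_combination (x 0 * ((u 0 * w 1 - u 1 * w 0) + 1)) * hd
  · linear_combination (x 0 * ((u 0 * w 1 - u 1 * w 0) - 1)) * hd
  · linear_combination (x 1 * ((u 0 * w 1 - u 1 * w 0) + 1)) * hd
  · linear_combination (x 1 * ((u 0 * w 1 - u 1 * w 0) - 1)) * hd

lemma mulV_inv_right {u w : Fin 2 → ℤ} (hd : IsUni u w) (x : Fin 2 → ℤ) :
    mulV u w (mulV (invU u w) (invW u w) x) = x := by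
  funext i
  fin_cases i <;>
    simp only [mulV, invU, invW, fareyDet, Matrix.cons_val_zero, Matrix.cons_val_one,
      Matrix.head_cons, Fin.zero_eta, Fin.mk_one] <;>
    rcases hd with hd | hd <;>
    rw [fareyDet] at hd
  · linear_combination (x 0 * ((u 0 * w 1 - u 1 * w 0) + 1)) * hd
  · linear_combination (x 0 * ((u 0 * w 1 - u 1 * w 0) - 1)) * hd
  · linear_combination (x 1 * ((u 0 * w 1 - u 1 * w 0) + 1)) * hd
  · linear_combination (x 1 * ((u 0 * w 1 - u 1 * w 0) - 1)) * hd

end FareyAux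

namespace FareyAux

def mulP {u w : Fin 2 → ℤ} (hd : IsUni u w) (v : PrimVec) : PrimVec :=
  ⟨mulV u w v.1, mulV_coprime hd v.2⟩

def mulFV {u w : Fin 2 → ℤ} (hd : IsUni u w) : FareyVertex → FareyVertex :=
  Quotient.lift (fun v => Quotient.mk fareySetoid (mulP hd v)) (by
    rintro a b (h | h) <;> apply Quotient.sound
    · exact Or.inl (by simp only [mulP, h])
    · exact Or.inr (by simp only [mulP, h, mulV_neg]))

lemma mulFV_mk {u w : Fin 2 → ℤ} (hd : IsUni u w) (v : PrimVec) :
    mulFV hd (Quotient.mk fareySetoid v) = Quotient.mk fareySetoid (mulP hd v) := rfl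

lemma adj_mulFV {u w : Fin 2 → ℤ} (hd : IsUni u w) {a b : FareyVertex}
    (hab : Farey.Adj a b) : Farey.Adj (mulFV hd a) (mulFV hd b) := by
  revert hab
  refine Quotient.inductionOn₂ a b ?_
  intro v v' hab
  have h1 : fareyDet v.1 v'.1 = 1 ∨ fareyDet v.1 v'.1 = -1 := hab
  show fareyDet (mulV u w v.1) (mulV u w v'.1) = 1 ∨
    fareyDet (mulV u w v.1) (mulV u w v'.1) = -1
  rw [fareyDet_mulV]
  rcases hd with hd | hd <;> rw [hd] <;> rcases h1 with h1 | h1 <;> rw [h1] <;> norm_num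

def fareyEquiv {u w : Fin 2 → ℤ} (hd : IsUni u w) : FareyVertex ≃ FareyVertex where
  toFun := mulFV hd
  invFun := mulFV (isUni_inv hd)
  left_inv := by
    intro z
    refine Quotient.inductionOn z fun v => ?_
    exact Quotient.sound (Or.inl (mulV_inv_left hd v.1))
  right_inv := by
    intro z
    refine Quotient.inductionOn z fun v => ?_
    exact Quotient.sound (Or.inl (mulV_inv_right hd v.1))

def fareyIso {u w : Fin 2 → ℤ} (hd : IsUni u w) : Farey ≃g Farey where
  toEquiv := fareyEquiv hd
  map_rel_iff' := by
    intro a b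
    constructor
    · intro hab
      have h2 := adj_mulFV (isUni_inv hd) hab
      have e1 : mulFV (isUni_inv hd) ((fareyEquiv hd) a) = a := (fareyEquiv hd).left_inv a
      have e2 : mulFV (isUni_inv hd) ((fareyEquiv hd) b) = b := (fareyEquiv hd).left_inv b
      rwa [e1, e2] at h2
    · exact adj_mulFV hd

def induceIso {V : Type*} {G : SimpleGraph V} (φ : G ≃g G) (s t : Set V)
    (h : ∀ z, z ∈ s ↔ φ z ∈ t) : G.induce s ≃g G.induce t where
  toEquiv := Equiv.subtypeEquiv φ.toEquiv h
  map_rel_iff' := by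
    intro a b
    exact φ.map_rel_iff

lemma two_comp_of_iso {V W : Type*} {G : SimpleGraph V} {H : SimpleGraph W} (φ : G ≃g H)
    (hG : ∃ c₁ c₂ : G.ConnectedComponent, c₁ ≠ c₂ ∧ ∀ c, c = c₁ ∨ c = c₂) :
    ∃ c₁ c₂ : H.ConnectedComponent, c₁ ≠ c₂ ∧ ∀ c, c = c₁ ∨ c = c₂ := by
  obtain ⟨c₁, c₂, hne, hall⟩ := hG
  refine ⟨φ.connectedComponentEquiv c₁, φ.connectedComponentEquiv c₂,
    fun he => hne (φ.connectedComponentEquiv.injective he), fun c => ?_⟩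
  rcases hall (φ.connectedComponentEquiv.symm c) with h | h
  · left
    rw [← Equiv.apply_symm_apply φ.connectedComponentEquiv c, h]
  · right
    rw [← Equiv.apply_symm_apply φ.connectedComponentEquiv c, h]

lemma not_connected_of_two {V : Type*} {G : SimpleGraph V}
    {c₁ c₂ : G.ConnectedComponent} (hne : c₁ ≠ c₂) : ¬ G.Connected := by
  intro hc
  apply hne
  exact SimpleGraph.ConnectedComponent.ind₂
    (fun v w => SimpleGraph.ConnectedComponent.sound (hc.preconnected v w)) c₁ c₂

end FareyAux

namespace FareyAux

lemma copVec {p q : ℤ} (h : IsCoprime p q) :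
    IsCoprime ((![p, q] : Fin 2 → ℤ) 0) ((![p, q] : Fin 2 → ℤ) 1) := by
  simpa using h

lemma cop10 : IsCoprime ((![1, 0] : Fin 2 → ℤ) 0) ((![1, 0] : Fin 2 → ℤ) 1) :=
  copVec (isCoprime_one_left)

lemma cop01 : IsCoprime ((![0, 1] : Fin 2 → ℤ) 0) ((![0, 1] : Fin 2 → ℤ) 1) :=
  copVec (isCoprime_one_right)

def A : FareyVertex := fv ![1, 0] cop10
def B : FareyVertex := fv ![0, 1] cop01
def S : Set FareyVertex := ({A, B}ᶜ : Set FareyVertex)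

lemma fv_ne_A {v : Fin 2 → ℤ} (h : IsCoprime (v 0) (v 1)) (hv : v 1 ≠ 0) : fv v h ≠ A := by
  intro he
  have h2 : v = ![1, 0] ∨ v = -![1, 0] := Quotient.exact he
  rcases h2 with h2 | h2 <;> apply hv <;> rw [h2] <;> simp

lemma fv_ne_B {v : Fin 2 → ℤ} (h : IsCoprime (v 0) (v 1)) (hv : v 0 ≠ 0) : fv v h ≠ B := by
  intro he
  have h2 : v = ![0, 1] ∨ v = -![0, 1] := Quotient.exact he
  rcases h2 with h2 | h2 <;> apply hv <;> rw [h2] <;> simp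

lemma mem_S {v : Fin 2 → ℤ} (h : IsCoprime (v 0) (v 1)) (hv0 : v 0 ≠ 0) (hv1 : v 1 ≠ 0) :
    fv v h ∈ S := by
  simp only [S, Set.mem_compl_iff, Set.mem_insert_iff, Set.mem_singleton_iff, not_or]
  exact ⟨fv_ne_A h hv1, fv_ne_B h hv0⟩

lemma mem_S' {p q : ℤ} (h : IsCoprime p q) (hp : p ≠ 0) (hq : q ≠ 0) :
    fv ![p, q] (copVec h) ∈ S :=
  mem_S _ (by simpa using hp) (by simpa using hq)

lemma classify {z : FareyVertex} (hz : z ∈ S) :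
    ∃ p q : ℤ, p ≠ 0 ∧ 1 ≤ q ∧ ∃ h : IsCoprime p q, z = fv ![p, q] (copVec h) := by
  obtain ⟨v, rfl⟩ := Quotient.exists_rep z
  simp only [S, Set.mem_compl_iff, Set.mem_insert_iff, Set.mem_singleton_iff, not_or] at hz
  obtain ⟨hA, hB⟩ := not_or.mp
    (show ¬ ((Quotient.mk fareySetoid v : FareyVertex) = A ∨ Quotient.mk fareySetoid v = B) from hz)
  have hcase : v.1 1 ≠ 0 := by
    intro h0
    apply hA
    have hu : IsUnit (v.1 0) := by
      have := v.2; rw [h0] at this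
      exact (isCoprime_zero_right).mp this
    rcases Int.isUnit_iff.mp hu with h1 | h1
    · exact Quotient.sound (Or.inl (by funext i; fin_cases i <;> simp [h1, h0]))
    · exact Quotient.sound (Or.inr (by funext i; fin_cases i <;> simp [h1, h0]))
  have hv0 : v.1 0 ≠ 0 := by
    intro h0
    apply hB
    have hu : IsUnit (v.1 1) := by
      have := v.2; rw [h0] at this
      exact (isCoprime_zero_left).mp this
    rcases Int.isUnit_iff.mp hu with h1 | h1
    · exact Quotient.sound (Or.inl (by funext i; fin_cases i <;> simp [h1, h0]))
    · exact Quotient.sound (Or.inr (by funext i; fin_cases i <;> simp [h1, h0]))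
  rcases lt_or_gt_of_ne hcase with hneg | hpos
  · refine ⟨-(v.1 0), -(v.1 1), by omega, by omega, (v.2.neg_left).neg_right, ?_⟩
    exact Quotient.sound (Or.inr (by funext i; fin_cases i <;> simp))
  · refine ⟨v.1 0, v.1 1, hv0, by omega, v.2, ?_⟩
    exact Quotient.sound (Or.inl (by funext i; fin_cases i <;> simp))

lemma adj_fv {v v' : Fin 2 → ℤ} (h : IsCoprime (v 0) (v 1)) (h' : IsCoprime (v' 0) (v' 1))
    (hd : fareyDet v v' = 1 ∨ fareyDet v v' = -1) : Farey.Adj (fv v h) (fv v' h') := hd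

def posFV : FareyVertex → Prop :=
  Quotient.lift (fun v : PrimVec => 0 < v.1 0 * v.1 1) (by
    rintro a b (h | h) <;>
      show (0 < a.1 0 * a.1 1) = (0 < b.1 0 * b.1 1)
    · rw [h]
    · rw [h]; simp)

lemma posFV_fv {p q : ℤ} (h : IsCoprime p q) :
    posFV (fv ![p, q] (copVec h)) ↔ 0 < p * q := by
  show 0 < (![p, q] : Fin 2 → ℤ) 0 * (![p, q] : Fin 2 → ℤ) 1 ↔ _
  simp

lemma no_cross {p q p' q' : ℤ} (hp : 1 ≤ p) (hq : 1 ≤ q) (hp' : p' ≤ -1) (hq' : 1 ≤ q')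
    (h : IsCoprime p q) (h' : IsCoprime p' q') :
    ¬ Farey.Adj (fv ![p, q] (copVec h)) (fv ![p', q'] (copVec h')) := by
  intro had
  have h1 : fareyDet ![p, q] ![p', q'] = 1 ∨ fareyDet ![p, q] ![p', q'] = -1 := had
  simp only [fareyDet, Matrix.cons_val_zero, Matrix.cons_val_one, Matrix.head_cons] at h1
  have h2 : 1 ≤ p * q' := by nlinarith
  have h3 : q * p' ≤ -1 := by nlinarith
  omega

lemma adj_pos_iff {a b : ↑S} (had : (Farey.induce S).Adj a b) :
    posFV a.1 ↔ posFV b.1 := by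
  obtain ⟨p, q, hp, hq, h, hz⟩ := classify a.2
  obtain ⟨p', q', hp', hq', h', hz'⟩ := classify b.2
  have hadj : Farey.Adj a.1 b.1 := had
  rw [hz, hz'] at hadj
  rw [hz, hz', posFV_fv h, posFV_fv h']
  rcases lt_or_gt_of_ne hp with hpn | hpp <;> rcases lt_or_gt_of_ne hp' with hpn' | hpp'
  · constructor <;> intro <;> nlinarith
  · exfalso
    exact no_cross hpp' hq' (by omega) hq h' h (Farey.adj_symm hadj)
  · exfalso
    exact no_cross hpp hq (by omega) hq' h h' hadj
  · constructor <;> intro <;> nlinarith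

lemma reach_pos_iff {a b : ↑S} (hr : (Farey.induce S).Reachable a b) :
    posFV a.1 ↔ posFV b.1 := by
  obtain ⟨p⟩ := hr
  induction p with
  | nil => exact Iff.rfl
  | cons had _ ih => exact (adj_pos_iff had).trans ih

end FareyAux

namespace FareyAux

lemma exists_neighbor {p q : ℤ} (hp : 1 ≤ p) (hq : 1 ≤ q) (hcop : IsCoprime p q)
    (hne : ¬(p = 1 ∧ q = 1)) :
    ∃ a b : ℤ, 1 ≤ a ∧ 1 ≤ b ∧ a + b < p + q ∧
      (p * b - q * a = 1 ∨ p * b - q * a = -1) := by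
  by_cases hq1 : q = 1
  · subst hq1
    have hp2 : 2 ≤ p := by omega
    exact ⟨p - 1, 1, by omega, le_refl 1, by omega, Or.inl (by ring)⟩
  · have hq2 : 2 ≤ q := by omega
    by_cases hp1 : p = 1
    · subst hp1
      exact ⟨1, q - 1, le_refl 1, by omega, by omega, Or.inr (by ring)⟩
    · have hp2 : 2 ≤ p := by omega
      obtain ⟨s, t, hst⟩ := hcop
      set b := s % q with hbdef
      have hq0 : (0:ℤ) < q := by omega
      have hb0 : 0 ≤ b := Int.emod_nonneg s (by omega)
      have hbq : b < q := Int.emod_lt_of_pos s hq0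
      have key : q ∣ p * b - 1 := by
        refine ⟨-t - p * (s / q), ?_⟩
        have hmod : s % q = s - q * (s / q) := Int.emod_def s q
        rw [hbdef, hmod]
        linear_combination hst
      have hbne : b ≠ 0 := by
        intro h0
        rw [h0] at key
        have : q ∣ (-1 : ℤ) := by simpa using key
        rcases Int.isUnit_iff.mp (isUnit_of_dvd_unit this isUnit_one.neg) with h1 | h1 <;> omega
      obtain ⟨a, ha⟩ := key
      have hb1 : 1 ≤ b := by omega
      have ha1 : 1 ≤ a := by
        by_contra hc
        push_neg at hc
        have h5 : a ≤ 0 := by omega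
        have h6 : q * a ≤ 0 := mul_nonpos_iff.mpr (Or.inl ⟨by omega, h5⟩)
        have h7 : 2 * 1 ≤ p * b := mul_le_mul hp2 hb1 (by omega) (by omega)
        linarith
      have hap : a < p := by
        have h7 : p * b ≤ p * (q - 1) := mul_le_mul_of_nonneg_left (by omega) (by omega)
        have h8 : q * a < q * p := by nlinarith
        exact lt_of_mul_lt_mul_left h8 (by omega)
      exact ⟨a, b, ha1, by omega, by omega, Or.inl (by omega)⟩

lemma cop11 : IsCoprime (1 : ℤ) 1 := isCoprime_one_left
lemma copm11 : IsCoprime (-1 : ℤ) 1 := isCoprime_one_right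

def vPos : ↑S := ⟨fv ![1, 1] (copVec cop11), mem_S' cop11 one_ne_zero one_ne_zero⟩
def vNeg : ↑S := ⟨fv ![-1, 1] (copVec copm11), mem_S' copm11 (by norm_num) one_ne_zero⟩

lemma reach_pos_main : ∀ n : ℕ, ∀ p q : ℤ, ∀ (hp : 1 ≤ p) (hq : 1 ≤ q)
    (hn : p + q ≤ n) (h : IsCoprime p q),
    (Farey.induce S).Reachable ⟨fv ![p, q] (copVec h), mem_S' h (by omega) (by omega)⟩ vPos := by
  intro n
  induction n with
  | zero => intro p q hp hq hn; omega
  | succ n ih =>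
    intro p q hp hq hn h
    by_cases hpq : p = 1 ∧ q = 1
    · obtain ⟨rfl, rfl⟩ := hpq
      exact SimpleGraph.Reachable.refl _
    · obtain ⟨a, b, ha, hb, hab, hd⟩ := exists_neighbor hp hq h hpq
      have hcop' : IsCoprime a b := by
        rcases hd with hd' | hd'
        · exact ⟨-q, p, by linarith⟩
        · exact ⟨q, -p, by linarith⟩
      have hdet : fareyDet ![p, q] ![a, b] = 1 ∨ fareyDet ![p, q] ![a, b] = -1 := by
        simp only [fareyDet, Matrix.cons_val_zero, Matrix.cons_val_one, Matrix.head_cons]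
        exact hd
      have hadj : (Farey.induce S).Adj
          ⟨fv ![p, q] (copVec h), mem_S' h (by omega) (by omega)⟩
          ⟨fv ![a, b] (copVec hcop'), mem_S' hcop' (by omega) (by omega)⟩ :=
        adj_fv _ _ hdet
      exact hadj.reachable.trans (ih a b ha hb (by omega) hcop')

def sigU : Fin 2 → ℤ := ![-1, 0]
def sigW : Fin 2 → ℤ := ![0, 1]

lemma sig_uni : IsUni sigU sigW := by
  right
  simp [IsUni, fareyDet, sigU, sigW]

lemma sig_A : (fareyIso sig_uni) A = A := by
  refine Quotient.sound (Or.inr ?_)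
  show mulV sigU sigW ![1, 0] = -![1, 0]
  funext i; fin_cases i <;> simp [mulV, sigU, sigW]

lemma sig_B : (fareyIso sig_uni) B = B := by
  refine Quotient.sound (Or.inl ?_)
  show mulV sigU sigW ![0, 1] = ![0, 1]
  funext i; fin_cases i <;> simp [mulV, sigU, sigW]

lemma sig_S : ∀ z, z ∈ S ↔ (fareyIso sig_uni) z ∈ S := by
  intro z
  simp only [S, Set.mem_compl_iff, Set.mem_insert_iff, Set.mem_singleton_iff, not_or]
  have hinj : Function.Injective (fareyIso sig_uni) := (fareyIso sig_uni).injective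
  constructor
  · rintro ⟨h1, h2⟩
    refine ⟨fun he => h1 ?_, fun he => h2 ?_⟩
    · exact hinj (he.trans sig_A.symm)
    · exact hinj (he.trans sig_B.symm)
  · rintro ⟨h1, h2⟩
    refine ⟨fun he => h1 ?_, fun he => h2 ?_⟩
    · rw [he]; exact sig_A
    · rw [he]; exact sig_B

def sigS : (Farey.induce S) ≃g (Farey.induce S) := induceIso (fareyIso sig_uni) S S sig_S

lemma sig_val {p q : ℤ} (h : IsCoprime p q) (hp : p ≠ 0) (hq : q ≠ 0) :
    (sigS ⟨fv ![p, q] (copVec h), mem_S' h hp hq⟩ : ↑S)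
      = ⟨fv ![-p, q] (copVec (h.neg_left)), mem_S' h.neg_left (by omega) hq⟩ := by
  refine Subtype.ext ?_
  show (fareyIso sig_uni) (fv ![p, q] (copVec h)) = fv ![-p, q] (copVec h.neg_left)
  refine Quotient.sound (Or.inl ?_)
  show mulV sigU sigW ![p, q] = ![-p, q]
  funext i; fin_cases i <;> simp [mulV, sigU, sigW]

lemma reach_neg_main {p q : ℤ} (hp : 1 ≤ p) (hq : 1 ≤ q) (h : IsCoprime p q) :
    (Farey.induce S).Reachable
      ⟨fv ![-p, q] (copVec h.neg_left), mem_S' h.neg_left (by omega) (by omega)⟩ vNeg := by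
  have hpos := reach_pos_main (p + q).toNat p q hp hq (by omega) h
  have himg := hpos.map sigS.toHom
  have e1 : sigS.toHom ⟨fv ![p, q] (copVec h), mem_S' h (by omega) (by omega)⟩
      = ⟨fv ![-p, q] (copVec h.neg_left), mem_S' h.neg_left (by omega) (by omega)⟩ :=
    sig_val h (by omega) (by omega)
  have e2 : sigS.toHom vPos = vNeg := sig_val cop11 one_ne_zero one_ne_zero
  rwa [e1, e2] at himg

lemma std_two_components :
    (∃ c₁ c₂ : (Farey.induce S).ConnectedComponent,
      c₁ ≠ c₂ ∧ ∀ c : (Farey.induce S).ConnectedComponent, c = c₁ ∨ c = c₂) := by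
  refine ⟨(Farey.induce S).connectedComponentMk vPos,
    (Farey.induce S).connectedComponentMk vNeg, ?_, ?_⟩
  · intro he
    have hr := SimpleGraph.ConnectedComponent.exact he
    have hiff := reach_pos_iff hr
    have h1 : posFV (vPos : ↑S).1 := (posFV_fv cop11).mpr (by norm_num)
    have h2 : ¬ posFV (vNeg : ↑S).1 := fun hh => by
      have := (posFV_fv copm11).mp hh
      omega
    exact h2 (hiff.mp h1)
  · intro c
    refine SimpleGraph.ConnectedComponent.ind (fun z => ?_) c
    obtain ⟨p, q, hp, hq, h, hz⟩ := classify z.2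
    have hzz : z = ⟨fv ![p, q] (copVec h), mem_S' h hp (by omega)⟩ := Subtype.ext hz
    rcases lt_or_gt_of_ne hp with hpn | hpp
    · right
      refine SimpleGraph.ConnectedComponent.sound ?_
      rw [hzz]
      have : (⟨fv ![p, q] (copVec h), mem_S' h hp (by omega)⟩ : ↑S)
          = ⟨fv ![-(-p), q] (copVec ((h.neg_left).neg_left)),
              mem_S' ((h.neg_left).neg_left) (by omega) (by omega)⟩ := by
        refine Subtype.ext (Quotient.sound (Or.inl ?_))
        funext i; fin_cases i <;> simp
      rw [this]
      exact reach_neg_main (p := -p) (by omega) (by omega) h.neg_left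
    · left
      refine SimpleGraph.ConnectedComponent.sound ?_
      rw [hzz]
      exact reach_pos_main (p + q).toNat p q (by omega) (by omega) (by omega) h

end FareyAux

theorem farey_edge_separates (u w : FareyVertex) (h : Farey.Adj u w) :
    (∃ c₁ c₂ : (Farey.induce ({u, w}ᶜ : Set FareyVertex)).ConnectedComponent,
      c₁ ≠ c₂ ∧ ∀ c : (Farey.induce ({u, w}ᶜ : Set FareyVertex)).ConnectedComponent,
        c = c₁ ∨ c = c₂) ∧
    ¬ (Farey.induce ({u, w}ᶜ : Set FareyVertex)).Connected := by
  open FareyAux in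
  obtain ⟨U, rfl⟩ := Quotient.exists_rep u
  obtain ⟨W, rfl⟩ := Quotient.exists_rep w
  have hd : IsUni U.1 W.1 := h
  have hA : (fareyIso hd) A = Quotient.mk fareySetoid U := by
    refine Quotient.sound (Or.inl ?_)
    show mulV U.1 W.1 ![1, 0] = U.1
    funext i; simp [mulV]
  have hB : (fareyIso hd) B = Quotient.mk fareySetoid W := by
    refine Quotient.sound (Or.inl ?_)
    show mulV U.1 W.1 ![0, 1] = W.1
    funext i; simp [mulV]
  have hinj : Function.Injective (fareyIso hd) := (fareyIso hd).injective
  have hS : ∀ z, z ∈ S ↔ (fareyIso hd) z ∈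
      ({Quotient.mk fareySetoid U, Quotient.mk fareySetoid W}ᶜ : Set FareyVertex) := by
    intro z
    simp only [S, Set.mem_compl_iff, Set.mem_insert_iff, Set.mem_singleton_iff, not_or]
    constructor
    · rintro ⟨h1, h2⟩
      exact fun hm => (show (fareyIso hd) z = Quotient.mk fareySetoid U ∨
        (fareyIso hd) z = Quotient.mk fareySetoid W from hm).elim
        (fun he => h1 (hinj (he.trans hA.symm))) (fun he => h2 (hinj (he.trans hB.symm)))
    · intro hm
      have h1 : ¬ (fareyIso hd) z = Quotient.mk fareySetoid U := fun he => hm (Or.inl he)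
      have h2 : ¬ (fareyIso hd) z = Quotient.mk fareySetoid W := fun he => hm (Or.inr he)
      refine ⟨fun he => h1 ?_, fun he => h2 ?_⟩
      · rw [he]; exact hA
      · rw [he]; exact hB
  have ψ := induceIso (fareyIso hd) S _ hS
  obtain ⟨c₁, c₂, hne, hall⟩ := two_comp_of_iso ψ std_two_components
  exact ⟨⟨c₁, c₂, hne, hall⟩, not_connected_of_two hne⟩
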